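/- Let T be a bounded operator on a Hilbert space H with ‖I - T‖ ≤ 1. Then T is not invertible if and only if ‖I - (1/2)T‖ = 1. -/

import Mathlib

set_option maxHeartbeats 1000000


/-- Lemma 1.1 (Blecher–Read): Let `T` be a bounded operator on a complex Hilbert
space `H` with `‖I - T‖ ≤ 1`. Then `T` is not invertible in `B(H)` if and only
if `‖I - (1/2)T‖ = 1`. -/
theorem stmt0 {H : Type*} [NormedAddCommGroup H] [InnerProductSpace ℂ H]
    [CompleteSpace H] (T : H →L[ℂ] H) (hT : ‖1 - T‖ ≤ 1) :
    ¬ IsUnit T ↔ ‖1 - (1 / 2 : ℂ) • T‖ = 1 := by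
  have hle : ‖1 - (1 / 2 : ℂ) • T‖ ≤ 1 := by
    have heq : (1 : H →L[ℂ] H) - (1 / 2 : ℂ) • T
        = (1 / 2 : ℂ) • (1 : H →L[ℂ] H) + (1 / 2 : ℂ) • (1 - T) := by
      module
    rw [heq]
    calc ‖(1/2:ℂ) • (1 : H →L[ℂ] H) + (1/2:ℂ) • ((1:H →L[ℂ] H) - T)‖
        ≤ ‖(1/2:ℂ) • (1 : H →L[ℂ] H)‖ + ‖(1/2:ℂ) • ((1:H →L[ℂ] H) - T)‖ :=
          norm_add_le _ _
      _ = (1/2) * ‖(1 : H →L[ℂ] H)‖ + (1/2) * ‖(1:H →L[ℂ] H) - T‖ := by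
          rw [norm_smul, norm_smul]; norm_num
      _ ≤ (1/2) * 1 + (1/2) * 1 := by
          gcongr
          exact ContinuousLinearMap.norm_id_le
      _ = 1 := by norm_num
  constructor
  · intro hnu
    by_contra hne
    have hlt : ‖1 - (1 / 2 : ℂ) • T‖ < 1 := lt_of_le_of_ne hle hne
    have hu2 : IsUnit ((1 / 2 : ℂ) • T) := by
      have h := (Units.oneSub (1 - (1 / 2 : ℂ) • T) hlt).isUnit
      rwa [Units.val_oneSub, sub_sub_cancel] at h
    apply hnu
    have h2 : IsUnit ((2:ℂ) • (1 : H →L[ℂ] H)) := by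
      refine ⟨⟨(2:ℂ) • (1 : H →L[ℂ] H), (1/2:ℂ) • (1 : H →L[ℂ] H), ?_, ?_⟩, rfl⟩
      · rw [smul_mul_smul_comm, one_mul]; norm_num
      · rw [smul_mul_smul_comm, one_mul]; norm_num
    have hTeq : T = ((2:ℂ) • (1 : H →L[ℂ] H)) * ((1/2:ℂ) • T) := by
      rw [smul_mul_assoc, one_mul, smul_smul]; norm_num
    rw [hTeq]
    exact h2.mul hu2
  · intro h hU
    have hne0 : (1 : H →L[ℂ] H) - (1 / 2 : ℂ) • T ≠ 0 := by
      intro h0; rw [h0] at h; simp at h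
    rcases subsingleton_or_nontrivial H with hs | hnt
    · exact hne0 (Subsingleton.elim _ _)
    obtain ⟨U, rfl⟩ := hU
    set c := ‖((U⁻¹ : (H →L[ℂ] H)ˣ) : H →L[ℂ] H)‖ with hc
    have hc0 : 0 ≤ c := norm_nonneg _
    have hlow : ∀ x : H, ‖x‖ ≤ c * ‖(U : H →L[ℂ] H) x‖ := by
      intro x
      have hx : ((U⁻¹ : (H →L[ℂ] H)ˣ) : H →L[ℂ] H) ((U : H →L[ℂ] H) x) = x := by
        rw [← ContinuousLinearMap.mul_apply, ← Units.val_mul, inv_mul_cancel,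
          Units.val_one, ContinuousLinearMap.one_apply]
      calc ‖x‖ = ‖((U⁻¹ : (H →L[ℂ] H)ˣ) : H →L[ℂ] H) ((U : H →L[ℂ] H) x)‖ := by rw [hx]
        _ ≤ c * ‖(U : H →L[ℂ] H) x‖ := ContinuousLinearMap.le_opNorm _ _
    have hUle : ‖(U : H →L[ℂ] H)‖ ≤ 2 := by
      calc ‖(U : H →L[ℂ] H)‖ = ‖(1 : H →L[ℂ] H) - (1 - (U : H →L[ℂ] H))‖ := by
            rw [sub_sub_cancel]
        _ ≤ ‖(1 : H →L[ℂ] H)‖ + ‖(1 : H →L[ℂ] H) - (U : H →L[ℂ] H)‖ := norm_sub_le _ _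
        _ ≤ 1 + 1 := by
            gcongr
            exact ContinuousLinearMap.norm_id_le
        _ = 2 := by norm_num
    have hchalf : (1/2 : ℝ) ≤ c := by
      have h2 : ‖(1 : H →L[ℂ] H)‖ ≤ c * ‖(U : H →L[ℂ] H)‖ := by
        calc ‖(1 : H →L[ℂ] H)‖
            = ‖((U⁻¹ : (H →L[ℂ] H)ˣ) : H →L[ℂ] H) * (U : H →L[ℂ] H)‖ := by
              rw [← Units.val_mul, inv_mul_cancel, Units.val_one]
          _ ≤ c * ‖(U : H →L[ℂ] H)‖ := norm_mul_le _ _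
      have h1 : ‖(1 : H →L[ℂ] H)‖ = 1 := norm_one
      nlinarith
    have hcpos : (0:ℝ) < c := by linarith
    set k := Real.sqrt (1 - 1/(4*c^2)) with hk
    have he0 : (0:ℝ) ≤ 1 - 1/(4*c^2) := by
      have : 1/(4*c^2) ≤ 1 := by
        rw [div_le_one (by positivity)]
        nlinarith
      linarith
    have hk2 : k^2 = 1 - 1/(4*c^2) := Real.sq_sqrt he0
    have hklt : k < 1 := by
      have h1 : k < Real.sqrt 1 := by
        apply Real.sqrt_lt_sqrt he0
        have : 0 < 1/(4*c^2) := by positivity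
        linarith
      rwa [Real.sqrt_one] at h1
    have hk0 : 0 ≤ k := Real.sqrt_nonneg _
    have hbd : ‖(1 : H →L[ℂ] H) - (1 / 2 : ℂ) • (U : H →L[ℂ] H)‖ ≤ k := by
      apply ContinuousLinearMap.opNorm_le_bound _ hk0
      intro x
      set y := (U : H →L[ℂ] H) x with hy
      set s := x - y with hs
      set v := ((1 : H →L[ℂ] H) - (1 / 2 : ℂ) • (U : H →L[ℂ] H)) x with hv
      have hveq : v = x - (1/2:ℂ) • y := by
        simp [hv, hy, ContinuousLinearMap.sub_apply]
      have hpar : ‖x + s‖ * ‖x + s‖ + ‖x - s‖ * ‖x - s‖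
          = 2 * (‖x‖ * ‖x‖ + ‖s‖ * ‖s‖) := by simpa only [sq] using parallelogram_law_with_norm ℂ x s
      have hxs : x - s = y := by rw [hs]; abel
      have h2v : x + s = (2:ℂ) • v := by
        rw [hveq, hs]; module
      have hnorm2v : ‖x + s‖ = 2 * ‖v‖ := by
        rw [h2v, norm_smul]
        norm_num
      rw [hxs, hnorm2v] at hpar
      have hmain : 4 * ‖v‖^2 + ‖y‖^2 = 2*(‖x‖^2 + ‖s‖^2) := by
        linear_combination hpar
      have hsle : ‖s‖ ≤ ‖x‖ := by
        have hseq : s = ((1 : H →L[ℂ] H) - (U : H →L[ℂ] H)) x := by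
          simp [hs, hy, ContinuousLinearMap.sub_apply]
        rw [hseq]
        calc ‖((1 : H →L[ℂ] H) - (U : H →L[ℂ] H)) x‖
            ≤ ‖(1 : H →L[ℂ] H) - (U : H →L[ℂ] H)‖ * ‖x‖ :=
              ContinuousLinearMap.le_opNorm _ _
          _ ≤ 1 * ‖x‖ := by gcongr
          _ = ‖x‖ := one_mul _
      have hyge : ‖x‖ ≤ c * ‖y‖ := hlow x
      have hy2 : ‖x‖^2 ≤ c^2 * ‖y‖^2 := by
        have := mul_le_mul hyge hyge (norm_nonneg x) (by positivity)
        nlinarith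
      have hs2 : ‖s‖^2 ≤ ‖x‖^2 := by
        have := mul_le_mul hsle hsle (norm_nonneg s) (norm_nonneg x)
        nlinarith
      have hmain' : 4*c^2*‖v‖^2 = 2*c^2*‖x‖^2 + 2*c^2*‖s‖^2 - c^2*‖y‖^2 := by
        linear_combination c^2 * hmain
      have e1 : c^2*‖s‖^2 ≤ c^2*‖x‖^2 :=
        mul_le_mul_of_nonneg_left hs2 (by positivity)
      have key : 4*c^2 * ‖v‖^2 ≤ (4*c^2 - 1) * ‖x‖^2 := by linarith
      have hck : 4*c^2*(k^2*‖x‖^2) = (4*c^2 - 1) * ‖x‖^2 := by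
        rw [hk2]; field_simp; try ring
      have hsq : ‖v‖^2 ≤ (k * ‖x‖)^2 := by
        have h4c : (0:ℝ) < 4*c^2 := by positivity
        have : 4*c^2 * ‖v‖^2 ≤ 4*c^2 * (k^2 * ‖x‖^2) := by linarith
        have hvk : ‖v‖^2 ≤ k^2 * ‖x‖^2 := le_of_mul_le_mul_left this h4c
        calc ‖v‖^2 ≤ k^2 * ‖x‖^2 := hvk
          _ = (k * ‖x‖)^2 := by ring
      have hfin := Real.sqrt_le_sqrt hsq
      rwa [Real.sqrt_sq (norm_nonneg _), Real.sqrt_sq (by positivity)] at hfin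
    rw [h] at hbd
    linarith
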